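/- Let α ∈ (0,1], let Σ_ν and Σ_ω be symmetric positive definite, let C_0 be symmetric positive semidefinite, and define C_{n+1} by C_{n+1}⁻¹ = GᵀΣ_ν⁻¹G + (α²C_n + Σ_ω)⁻¹. Then for every n ≥ 1, C_n is positive definite and the precision matrices satisfy the uniform two-sided bound GᵀΣ_ν⁻¹G ⪯ C_n⁻¹ ⪯ GᵀΣ_ν⁻¹G + Σ_ω⁻¹. -/

import Mathlib

open Matrix

section Helpers
variable {n : Type*} [Fintype n] [DecidableEq n]

lemma psd_smul {A : Matrix n n ℝ} (hA : A.PosSemidef) {r : ℝ} (hr : 0 ≤ r) :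
    (r • A).PosSemidef := by
  refine posSemidef_iff_dotProduct_mulVec.mpr ⟨?_, ?_⟩
  · unfold Matrix.IsHermitian
    rw [conjTranspose_smul, star_trivial, hA.1.eq]
  · intro x
    rw [smul_mulVec, dotProduct_smul]
    exact mul_nonneg hr (hA.dotProduct_mulVec_nonneg x)

lemma inv_sub_inv_psd {S D : Matrix n n ℝ} (hS : S.PosDef) (hD : D.PosSemidef) :
    (S⁻¹ - (D + S)⁻¹).PosSemidef := by
  set E := D + S with hE
  have hEpd : E.PosDef := hS.posSemidef_add hD
  have hSu : IsUnit S.det := hS.det_pos.ne'.isUnit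
  have hEu : IsUnit E.det := hEpd.det_pos.ne'.isUnit
  have hDE : D = E - S := (add_sub_cancel_right D S).symm
  have key : D + D * S⁻¹ * D = E * S⁻¹ * E - E := by
    rw [hDE]
    simp only [sub_mul, mul_sub, Matrix.nonsing_inv_mul_cancel_right _ _ hSu,
      Matrix.mul_nonsing_inv S hSu, Matrix.nonsing_inv_mul S hSu, one_mul, mul_one]
    abel
  have hpsd : (D + D * S⁻¹ * D).PosSemidef := by
    have : (Dᴴ * S⁻¹ * D).PosSemidef := hS.inv.posSemidef.conjTranspose_mul_mul_same D
    rw [hD.1] at this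
    exact hD.add this
  have hconj : ((E⁻¹)ᴴ * (D + D * S⁻¹ * D) * E⁻¹).PosSemidef :=
    hpsd.conjTranspose_mul_mul_same E⁻¹
  rw [hEpd.inv.1, key] at hconj
  have heq : E⁻¹ * (E * S⁻¹ * E - E) * E⁻¹ = S⁻¹ - E⁻¹ := by
    rw [mul_sub, sub_mul, ← mul_assoc, ← mul_assoc, Matrix.nonsing_inv_mul E hEu,
      one_mul, Matrix.mul_nonsing_inv_cancel_right _ _ hEu]
    simp
  rwa [heq] at hconj

end Helpers

/-- Let `α ∈ (0,1]`, `Sν, Sω` symmetric positive definite, `C 0`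
symmetric positive semidefinite, and `C (n+1)⁻¹ = Gᵀ Sν⁻¹ G + (α² C n + Sω)⁻¹`.
Then for every `n ≥ 1`, `C n` is positive definite and
`Gᵀ Sν⁻¹ G ⪯ (C n)⁻¹ ⪯ Gᵀ Sν⁻¹ G + Sω⁻¹`. -/
theorem kalman_precision_uniform_bounds
    {Nθ Ny : ℕ} (hNθ : 0 < Nθ) (hNy : 0 < Ny)
    (G : Matrix (Fin Ny) (Fin Nθ) ℝ)
    (Sν : Matrix (Fin Ny) (Fin Ny) ℝ) (hSν : Sν.PosDef)
    (Sω : Matrix (Fin Nθ) (Fin Nθ) ℝ) (hSω : Sω.PosDef)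
    (α : ℝ) (hα : α ∈ Set.Ioc (0 : ℝ) 1)
    (C : ℕ → Matrix (Fin Nθ) (Fin Nθ) ℝ) (hC0 : (C 0).PosSemidef)
    (hCrec : ∀ n, C (n + 1) = (Gᵀ * Sν⁻¹ * G + (α ^ 2 • C n + Sω)⁻¹)⁻¹) :
    ∀ n : ℕ, 1 ≤ n → (C n).PosDef ∧
      ((C n)⁻¹ - Gᵀ * Sν⁻¹ * G).PosSemidef ∧
      (Gᵀ * Sν⁻¹ * G + Sω⁻¹ - (C n)⁻¹).PosSemidef := by
  have hα2 : (0:ℝ) ≤ α ^ 2 := sq_nonneg α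
  have hGt : Gᴴ = Gᵀ := by ext i j; simp [conjTranspose_apply]
  have hK : (Gᵀ * Sν⁻¹ * G).PosSemidef := by
    have := hSν.inv.posSemidef.conjTranspose_mul_mul_same G
    rwa [hGt] at this
  have hall : ∀ m, (C m).PosSemidef := by
    intro m
    induction m with
    | zero => exact hC0
    | succ k ih =>
      rw [hCrec k]
      have hE : (α ^ 2 • C k + Sω).PosDef := hSω.posSemidef_add (psd_smul ih hα2)
      exact (hE.inv.posSemidef_add hK).inv.posSemidef
  rintro (_ | m) hn
  · omega
  have hE : (α ^ 2 • C m + Sω).PosDef := hSω.posSemidef_add (psd_smul (hall m) hα2)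
  have hM : (Gᵀ * Sν⁻¹ * G + (α ^ 2 • C m + Sω)⁻¹).PosDef := hE.inv.posSemidef_add hK
  have hMu : IsUnit (Gᵀ * Sν⁻¹ * G + (α ^ 2 • C m + Sω)⁻¹).det := hM.det_pos.ne'.isUnit
  rw [hCrec m, Matrix.nonsing_inv_nonsing_inv _ hMu]
  refine ⟨hM.inv, ?_, ?_⟩
  · rw [add_sub_cancel_left]
    exact hE.inv.posSemidef
  · have h2 := inv_sub_inv_psd hSω (psd_smul (hall m) hα2)
    have : Gᵀ * Sν⁻¹ * G + Sω⁻¹ - (Gᵀ * Sν⁻¹ * G + (α ^ 2 • C m + Sω)⁻¹)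
        = Sω⁻¹ - (α ^ 2 • C m + Sω)⁻¹ := by abel
    rwa [this]
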